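/- Let p, q be positive integers with gcd(p, q) = 1, and let T_{p,q} = ⟨a, b ∣ aᵖ = b^q⟩. The quotient of T_{p,q} by the normal closure of the image of aᵖ is isomorphic to the free product (ℤ/pℤ) ∗ (ℤ/qℤ). -/

import Mathlib

/-- Relator of the toric link group `T_{p,q} = ⟨a, b ∣ aᵖ = b^q⟩`, with `a = 0`, `b = 1`. -/
def toricRels (p q : ℕ) : Set (FreeGroup (Fin 2)) :=
  {FreeGroup.of 0 ^ p * (FreeGroup.of 1 ^ q)⁻¹}

def zmodMulHom {G : Type*} [Group G] (n : ℕ) (x : G) (hx : x ^ n = 1) :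
    Multiplicative (ZMod n) →* G :=
  AddMonoidHom.toMultiplicativeLeft (ZMod.lift n ⟨zmultiplesHom (Additive G) (Additive.ofMul x), by
    simp only [zmultiplesHom_apply, natCast_zsmul]
    show Additive.ofMul (x ^ n) = 0
    rw [hx]; rfl⟩)

@[simp] lemma zmodMulHom_ofAdd_one {G : Type*} [Group G] (n : ℕ) (x : G) (hx : x ^ n = 1) :
    zmodMulHom n x hx (Multiplicative.ofAdd 1) = x := by
  have h1 : (1 : ZMod n) = ((1 : ℤ) : ZMod n) := by norm_cast
  rw [zmodMulHom, AddMonoidHom.coe_toMultiplicativeLeft]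
  show Additive.toMul (ZMod.lift n _ (Multiplicative.toAdd (Multiplicative.ofAdd (1 : ZMod n)))) = x
  rw [toAdd_ofAdd, h1, ZMod.lift_coe]
  show Additive.toMul ((1 : ℤ) • Additive.ofMul x) = x
  simp

lemma zmod_hom_ext {G : Type*} [Monoid G] {n : ℕ} [NeZero n]
    {f g : Multiplicative (ZMod n) →* G}
    (h : f (Multiplicative.ofAdd 1) = g (Multiplicative.ofAdd 1)) : f = g := by
  refine MonoidHom.ext fun z => ?_
  have hz : z = Multiplicative.ofAdd (1 : ZMod n) ^ ZMod.val (Multiplicative.toAdd z) := by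
    rw [← ofAdd_nsmul, nsmul_eq_mul, mul_one, ZMod.natCast_val, ZMod.cast_id]
    rfl
  rw [hz, map_pow, map_pow, h]

@[simp] lemma ofAdd_one_pow_self (n : ℕ) :
    (Multiplicative.ofAdd (1 : ZMod n)) ^ n = 1 := by
  rw [← ofAdd_nsmul, nsmul_eq_mul, mul_one, ZMod.natCast_self]
  rfl

/-- The quotient of `T_{p,q}` (with `gcd(p,q) = 1`) by the normal closure of `aᵖ` is
isomorphic to the free product `(ℤ/pℤ) ∗ (ℤ/qℤ)`. -/
theorem stmt_10 (p q : ℕ) (hp : 0 < p) (hq : 0 < q) (hpq : Nat.gcd p q = 1) :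
    Nonempty
      ((PresentedGroup (toricRels p q) ⧸
          Subgroup.normalClosure
            {(PresentedGroup.of 0 : PresentedGroup (toricRels p q)) ^ p}) ≃*
        Monoid.Coprod (Multiplicative (ZMod p)) (Multiplicative (ZMod q))) := by
  have : NeZero p := ⟨hp.ne'⟩
  have : NeZero q := ⟨hq.ne'⟩
  set R := toricRels p q with hR
  set N := Subgroup.normalClosure {(PresentedGroup.of 0 : PresentedGroup R) ^ p} with hN
  set Q := PresentedGroup R ⧸ N with hQ
  set C := Monoid.Coprod (Multiplicative (ZMod p)) (Multiplicative (ZMod q)) with hC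
  -- generators of Q
  set a : Q := QuotientGroup.mk (PresentedGroup.of 0) with ha'
  set b : Q := QuotientGroup.mk (PresentedGroup.of 1) with hb'
  have ha : a ^ p = 1 := by
    rw [ha', ← QuotientGroup.mk_pow, QuotientGroup.eq_one_iff]
    exact Subgroup.subset_normalClosure rfl
  have hrel : (PresentedGroup.of 0 : PresentedGroup R) ^ p =
      (PresentedGroup.of 1 : PresentedGroup R) ^ q := by
    have : PresentedGroup.mk R (FreeGroup.of 0 ^ p * (FreeGroup.of 1 ^ q)⁻¹) = 1 := by
      show (QuotientGroup.mk (FreeGroup.of 0 ^ p * (FreeGroup.of 1 ^ q)⁻¹) :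
        PresentedGroup R) = 1
      rw [QuotientGroup.eq_one_iff]
      exact Subgroup.subset_normalClosure rfl
    rw [map_mul, map_inv, map_pow, map_pow] at this
    exact mul_inv_eq_one.mp this
  have hb : b ^ q = 1 := by
    rw [hb', ← QuotientGroup.mk_pow, ← hrel, QuotientGroup.mk_pow]
    exact ha
  -- map Q → C
  let f : Fin 2 → C := ![Monoid.Coprod.inl (Multiplicative.ofAdd (1 : ZMod p)),
    Monoid.Coprod.inr (Multiplicative.ofAdd (1 : ZMod q))]
  have hf : ∀ r ∈ R, FreeGroup.lift f r = 1 := by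
    rintro r rfl
    have hcalc : FreeGroup.lift f (FreeGroup.of 0 ^ p * (FreeGroup.of 1 ^ q)⁻¹)
        = (f 0) ^ p * ((f 1) ^ q)⁻¹ := by
      rw [map_mul, map_inv, map_pow, map_pow, FreeGroup.lift_apply_of, FreeGroup.lift_apply_of]
    rw [hcalc]
    show Monoid.Coprod.inl (Multiplicative.ofAdd (1 : ZMod p)) ^ p *
      (Monoid.Coprod.inr (Multiplicative.ofAdd (1 : ZMod q)) ^ q)⁻¹ = 1
    rw [← map_pow (Monoid.Coprod.inl : Multiplicative (ZMod p) →* C),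
      ← map_pow (Monoid.Coprod.inr : Multiplicative (ZMod q) →* C),
      ofAdd_one_pow_self, ofAdd_one_pow_self, map_one, map_one, inv_one, mul_one]
  let φ0 : PresentedGroup R →* C := PresentedGroup.toGroup hf
  have hker : N ≤ φ0.ker := by
    rw [hN]
    apply Subgroup.normalClosure_le_normal
    rintro x rfl
    show φ0 (PresentedGroup.of 0 ^ p) = 1
    rw [map_pow, PresentedGroup.toGroup.of]
    show (Monoid.Coprod.inl (Multiplicative.ofAdd (1 : ZMod p)) : C) ^ p = 1
    rw [← map_pow (Monoid.Coprod.inl : Multiplicative (ZMod p) →* C),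
      ofAdd_one_pow_self, map_one]
  let φ : Q →* C := QuotientGroup.lift N φ0 fun x hx => hker hx
  let ψ : C →* Q := Monoid.Coprod.lift (zmodMulHom p a ha) (zmodMulHom q b hb)
  have hφa : φ a = Monoid.Coprod.inl (Multiplicative.ofAdd (1 : ZMod p)) := by
    show φ0 (PresentedGroup.of 0) = _
    rw [PresentedGroup.toGroup.of]; rfl
  have hφb : φ b = Monoid.Coprod.inr (Multiplicative.ofAdd (1 : ZMod q)) := by
    show φ0 (PresentedGroup.of 1) = _
    rw [PresentedGroup.toGroup.of]; rfl
  have h₁ : ψ.comp φ = MonoidHom.id Q := by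
    refine MonoidHom.ext fun x => ?_
    induction x using QuotientGroup.induction_on with
    | H z =>
      induction z using PresentedGroup.induction_on with
      | H w =>
        show (ψ.comp φ).comp ((QuotientGroup.mk' N).comp (PresentedGroup.mk R)) w =
          (MonoidHom.id Q).comp ((QuotientGroup.mk' N).comp (PresentedGroup.mk R)) w
        refine DFunLike.congr_fun (FreeGroup.ext_hom _ _ fun i => ?_) w
        fin_cases i
        · show ψ (φ a) = a
          rw [hφa]
          show zmodMulHom p a ha (Multiplicative.ofAdd 1) = a
          simp
        · show ψ (φ b) = b
          rw [hφb]
          show zmodMulHom q b hb (Multiplicative.ofAdd 1) = b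
          simp
  have h₂ : φ.comp ψ = MonoidHom.id C := by
    apply Monoid.Coprod.hom_ext
    · apply zmod_hom_ext
      show φ (ψ (Monoid.Coprod.inl (Multiplicative.ofAdd 1))) = Monoid.Coprod.inl _
      rw [show ψ (Monoid.Coprod.inl (Multiplicative.ofAdd 1)) = a by
        show Monoid.Coprod.lift _ _ _ = a
        rw [Monoid.Coprod.lift_apply_inl, zmodMulHom_ofAdd_one]]
      exact hφa
    · apply zmod_hom_ext
      show φ (ψ (Monoid.Coprod.inr (Multiplicative.ofAdd 1))) = Monoid.Coprod.inr _
      rw [show ψ (Monoid.Coprod.inr (Multiplicative.ofAdd 1)) = b by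
        show Monoid.Coprod.lift _ _ _ = b
        rw [Monoid.Coprod.lift_apply_inr, zmodMulHom_ofAdd_one]]
      exact hφb
  exact ⟨MonoidHom.toMulEquiv φ ψ h₁ h₂⟩
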